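/- There exists a function h: ℝ → ℝ such that for any independent real random variables A and B with mean zero and finite moments up to order 6, if E[(A+B)^6] ≤ M then |E[(A+B)^i]| ≤ h(M), |E[A^i]| ≤ h(M), and |E[B^i]| ≤ h(M) for every i ∈ {1,…,6}. -/

import Mathlib

open MeasureTheory ProbabilityTheory

private lemma aux_pow_le (x : ℝ) {i j : ℕ} (hij : i ≤ j) (hj : Even j) :
    |x ^ i| ≤ 1 + x ^ j := by
  rw [abs_pow]
  have hxj : |x| ^ j = x ^ j := hj.pow_abs x
  rcases le_or_gt |x| 1 with h | h
  · have h1 : |x| ^ i ≤ 1 := pow_le_one₀ (abs_nonneg x) h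
    have h2 : (0:ℝ) ≤ x ^ j := by rw [← hxj]; positivity
    linarith
  · have h1 : |x| ^ i ≤ |x| ^ j := pow_le_pow_right₀ h.le hij
    rw [hxj] at h1
    linarith

private lemma aux_moment_le {Ω : Type} [MeasurableSpace Ω] (P : Measure Ω)
    [IsProbabilityMeasure P] (X : Ω → ℝ) {i j : ℕ} (hij : i ≤ j) (hj : Even j)
    (hXi : Integrable (fun ω => X ω ^ i) P) (hXj : Integrable (fun ω => X ω ^ j) P) :
    |∫ ω, X ω ^ i ∂P| ≤ 1 + ∫ ω, X ω ^ j ∂P := by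
  calc |∫ ω, X ω ^ i ∂P| ≤ ∫ ω, |X ω ^ i| ∂P := by
        simpa [Real.norm_eq_abs] using norm_integral_le_integral_norm (fun ω => X ω ^ i) (μ := P)
    _ ≤ ∫ ω, (1 + X ω ^ j) ∂P := by
        refine integral_mono hXi.abs ((integrable_const 1).add hXj) fun ω => ?_
        exact aux_pow_le (X ω) hij hj
    _ = 1 + ∫ ω, X ω ^ j ∂P := by
        rw [integral_add (integrable_const 1) hXj]
        simp

private lemma aux_expand {Ω : Type} [MeasurableSpace Ω] {P : Measure Ω}
    [IsProbabilityMeasure P] {A B : Ω → ℝ} (hAB : IndepFun A B P) (n : ℕ)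
    (hA : ∀ k, k ≤ n → Integrable (fun ω => A ω ^ k) P)
    (hB : ∀ k, k ≤ n → Integrable (fun ω => B ω ^ k) P) :
    ∫ ω, (A ω + B ω) ^ n ∂P =
      ∑ j ∈ Finset.range (n + 1),
        (n.choose j : ℝ) * ((∫ ω, A ω ^ j ∂P) * (∫ ω, B ω ^ (n - j) ∂P)) := by
  have hjk : ∀ j : ℕ, IndepFun (fun ω => A ω ^ j) (fun ω => B ω ^ (n - j)) P := fun j =>
    hAB.comp (measurable_id.pow_const j) (measurable_id.pow_const (n - j))
  have hint : ∀ j ∈ Finset.range (n + 1),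
      Integrable (fun ω => A ω ^ j * B ω ^ (n - j) * (n.choose j : ℝ)) P := by
    intro j hj
    have hj' : j ≤ n := Nat.lt_succ_iff.mp (Finset.mem_range.mp hj)
    exact (((hjk j).integrable_mul (hA j hj') (hB (n - j) (Nat.sub_le n j)))).mul_const _
  calc ∫ ω, (A ω + B ω) ^ n ∂P
      = ∫ ω, ∑ j ∈ Finset.range (n + 1),
          A ω ^ j * B ω ^ (n - j) * (n.choose j : ℝ) ∂P := by
        congr 1; funext ω; exact add_pow (A ω) (B ω) n
    _ = ∑ j ∈ Finset.range (n + 1),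
          ∫ ω, A ω ^ j * B ω ^ (n - j) * (n.choose j : ℝ) ∂P :=
        integral_finset_sum _ hint
    _ = ∑ j ∈ Finset.range (n + 1),
          (n.choose j : ℝ) * ((∫ ω, A ω ^ j ∂P) * (∫ ω, B ω ^ (n - j) ∂P)) := by
        refine Finset.sum_congr rfl fun j hj => ?_
        have hj' : j ≤ n := Nat.lt_succ_iff.mp (Finset.mem_range.mp hj)
        rw [integral_mul_const]
        have := (hjk j).integral_mul_eq_mul_integral (hA j hj').aestronglyMeasurable (hB (n - j) (Nat.sub_le n j)).aestronglyMeasurable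
        rw [show ((fun ω => A ω ^ j) * fun ω => B ω ^ (n - j)) =
          fun ω => A ω ^ j * B ω ^ (n - j) from rfl] at this
        rw [this]; ring

theorem stmt8 :
    ∃ h : ℝ → ℝ,
      ∀ (Ω : Type) (_ : MeasurableSpace Ω) (P : Measure Ω), IsProbabilityMeasure P →
        ∀ (A B : Ω → ℝ), Measurable A → Measurable B → IndepFun A B P →
          (∫ ω, A ω ∂P) = 0 → (∫ ω, B ω ∂P) = 0 →
          (∀ k ∈ Finset.Icc 1 6, Integrable (fun ω => A ω ^ k) P) →
          (∀ k ∈ Finset.Icc 1 6, Integrable (fun ω => B ω ^ k) P) →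
          (∀ k ∈ Finset.Icc 1 6, Integrable (fun ω => (A ω + B ω) ^ k) P) →
          ∀ M : ℝ, (∫ ω, (A ω + B ω) ^ 6 ∂P) ≤ M →
            ∀ i ∈ Finset.Icc 1 6,
              |∫ ω, (A ω + B ω) ^ i ∂P| ≤ h M ∧
              |∫ ω, A ω ^ i ∂P| ≤ h M ∧
              |∫ ω, B ω ^ i ∂P| ≤ h M := by
  refine ⟨fun M => 1 + |M| + 20 * (|M| + 2) ^ 2, ?_⟩
  intro Ω _ P hP A B hAm hBm hAB hA0 hB0 hAint hBint hSint M hM i hi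
  have hA : ∀ k, k ≤ 6 → Integrable (fun ω => A ω ^ k) P := by
    intro k hk
    rcases Nat.eq_zero_or_pos k with h | h
    · subst h; simpa using (integrable_const (1:ℝ))
    · exact hAint k (Finset.mem_Icc.mpr ⟨h, hk⟩)
  have hB : ∀ k, k ≤ 6 → Integrable (fun ω => B ω ^ k) P := by
    intro k hk
    rcases Nat.eq_zero_or_pos k with h | h
    · subst h; simpa using (integrable_const (1:ℝ))
    · exact hBint k (Finset.mem_Icc.mpr ⟨h, hk⟩)
  have hS : ∀ k, k ≤ 6 → Integrable (fun ω => (A ω + B ω) ^ k) P := by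
    intro k hk
    rcases Nat.eq_zero_or_pos k with h | h
    · subst h; simpa using (integrable_const (1:ℝ))
    · exact hSint k (Finset.mem_Icc.mpr ⟨h, hk⟩)
  obtain ⟨hi1, hi6⟩ := Finset.mem_Icc.mp hi
  -- nonnegativity of even moments
  have nA2 : (0:ℝ) ≤ ∫ ω, A ω ^ 2 ∂P := integral_nonneg fun ω => by positivity
  have nA4 : (0:ℝ) ≤ ∫ ω, A ω ^ 4 ∂P := integral_nonneg fun ω => by positivity
  have nA6 : (0:ℝ) ≤ ∫ ω, A ω ^ 6 ∂P := integral_nonneg fun ω => by positivity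
  have nB2 : (0:ℝ) ≤ ∫ ω, B ω ^ 2 ∂P := integral_nonneg fun ω => by positivity
  have nB4 : (0:ℝ) ≤ ∫ ω, B ω ^ 4 ∂P := integral_nonneg fun ω => by positivity
  have nB6 : (0:ℝ) ≤ ∫ ω, B ω ^ 6 ∂P := integral_nonneg fun ω => by positivity
  have nS6 : (0:ℝ) ≤ ∫ ω, (A ω + B ω) ^ 6 ∂P := integral_nonneg fun ω => by positivity
  have hM0 : (0:ℝ) ≤ M := nS6.trans hM
  -- the 4th moment expansion
  have E4 := aux_expand hAB 4 (fun k hk => hA k (by omega)) (fun k hk => hB k (by omega))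
  have E6 := aux_expand hAB 6 hA hB
  simp only [Finset.sum_range_succ, Finset.sum_range_zero, Nat.choose, pow_zero, pow_one,
    hA0, hB0, integral_const, measure_univ, ENNReal.toReal_one, smul_eq_mul] at E4 E6
  norm_num at E4 E6
  rw [hB0] at E4 E6
  norm_num at E4 E6
  -- S^4 bound
  have hS4 : ∫ ω, (A ω + B ω) ^ 4 ∂P ≤ 1 + M := by
    have h1 := aux_moment_le P (fun ω => A ω + B ω) (by norm_num : 4 ≤ 6)
      (by decide) (hS 4 (by norm_num)) (hS 6 le_rfl)
    have h2 := le_abs_self (∫ ω, (A ω + B ω) ^ 4 ∂P)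
    linarith
  have hA4 : ∫ ω, A ω ^ 4 ∂P ≤ 1 + M := by nlinarith [mul_nonneg nA2 nB2]
  have hB4 : ∫ ω, B ω ^ 4 ∂P ≤ 1 + M := by nlinarith [mul_nonneg nA2 nB2]
  have hA3 : |∫ ω, A ω ^ 3 ∂P| ≤ M + 2 := by
    have := aux_moment_le P A (by norm_num : 3 ≤ 4) (by decide)
      (hA 3 (by norm_num)) (hA 4 (by norm_num))
    linarith
  have hB3 : |∫ ω, B ω ^ 3 ∂P| ≤ M + 2 := by
    have := aux_moment_le P B (by norm_num : 3 ≤ 4) (by decide)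
      (hB 3 (by norm_num)) (hB 4 (by norm_num))
    linarith
  have hprod : -((∫ ω, A ω ^ 3 ∂P) * (∫ ω, B ω ^ 3 ∂P)) ≤ (M + 2) ^ 2 := by
    have h1 : |(∫ ω, A ω ^ 3 ∂P) * (∫ ω, B ω ^ 3 ∂P)| ≤ (M + 2) ^ 2 := by
      rw [abs_mul, sq]
      exact mul_le_mul hA3 hB3 (abs_nonneg _) (by linarith)
    have := neg_abs_le ((∫ ω, A ω ^ 3 ∂P) * (∫ ω, B ω ^ 3 ∂P))
    linarith
  have hA6 : ∫ ω, A ω ^ 6 ∂P ≤ M + 20 * (M + 2) ^ 2 := by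
    nlinarith [mul_nonneg nA4 nB2, mul_nonneg nA2 nB4]
  have hB6 : ∫ ω, B ω ^ 6 ∂P ≤ M + 20 * (M + 2) ^ 2 := by
    nlinarith [mul_nonneg nA4 nB2, mul_nonneg nA2 nB4]
  simp only [abs_of_nonneg hM0]
  refine ⟨?_, ?_, ?_⟩
  · have := aux_moment_le P (fun ω => A ω + B ω) hi6 (by decide) (hS i hi6) (hS 6 le_rfl)
    nlinarith [sq_nonneg (M + 2)]
  · have := aux_moment_le P A hi6 (by decide) (hA i hi6) (hA 6 le_rfl)
    linarith
  · have := aux_moment_le P B hi6 (by decide) (hB i hi6) (hB 6 le_rfl)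
    linarith
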